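/- Let A be a commutative ring, I ⊆ A an ideal, B a commutative ring with a ring homomorphism φ : B → A/I. Then every object (N, g, M) of the iso-comma category of finitely presented modules — consisting of a finitely presented B-module N, a finitely presented A-module M, and an isomorphism g : A/I ⊗_B N ≅ M/IM of A/I-modules — admits an epimorphism from an object of the form (B^n, can, A^n) for some n, where can is the canonical isomorphism A/I ⊗_B B^n ≅ (A/I)^n ≅ A^n/IA^n. -/

import Mathlib

open TensorProduct Function

/-- Let `I ⊆ A` be an ideal and `φ : B → A/I` a ring homomorphism.  Every object
`(N, g, M)` of the iso-comma category of finitely presented modules — `N` a finitely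
presented `B`-module, `M` a finitely presented `A`-module, `g : A/I ⊗_B N ≅ M/IM` an
`A/I`-module isomorphism — admits an epimorphism from an object `(Bⁿ, can, Aⁿ)`:
there are surjections `p : Bⁿ → N` and `q : Aⁿ → M` compatible with `g` and the
canonical identification `A/I ⊗_B Bⁿ ≅ Aⁿ/IAⁿ`. -/
theorem stmt_18 {A B : Type} [CommRing A] [CommRing B] (I : Ideal A)
    (φ : B →+* A ⧸ I) [Algebra B (A ⧸ I)]
    (hφ : algebraMap B (A ⧸ I) = φ)
    (N : Type) [AddCommGroup N] [Module B N] [Module.FinitePresentation B N]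
    (M : Type) [AddCommGroup M] [Module A M] [Module.FinitePresentation A M]
    (g : ((A ⧸ I) ⊗[B] N) ≃ₗ[A ⧸ I] (M ⧸ (I • ⊤ : Submodule A M))) :
    ∃ (n : ℕ) (p : (Fin n → B) →ₗ[B] N) (q : (Fin n → A) →ₗ[A] M),
      Surjective p ∧ Surjective q ∧
      ∀ i : Fin n,
        g ((1 : A ⧸ I) ⊗ₜ[B] p (Pi.single i 1))
          = Submodule.Quotient.mk (q (Pi.single i 1)) := by
  classical
  obtain ⟨k, x, hx⟩ := Module.Finite.exists_fin (R := B) (M := N)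
  choose m hm using fun i =>
    Submodule.Quotient.mk_surjective (I • ⊤ : Submodule A M) (g ((1 : A ⧸ I) ⊗ₜ[B] x i))
  set S := Submodule.span (A ⧸ I) (Set.range fun i => (1 : A ⧸ I) ⊗ₜ[B] x i) with hSdef
  have key : ∀ y : N, (1 : A ⧸ I) ⊗ₜ[B] y ∈ S := by
    intro y
    have hy : y ∈ Submodule.span B (Set.range x) := hx ▸ Submodule.mem_top
    induction hy using Submodule.span_induction with
    | mem z hz =>
      obtain ⟨i, rfl⟩ := hz
      exact Submodule.subset_span ⟨i, rfl⟩
    | zero => rw [tmul_zero]; exact zero_mem S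
    | add a b _ _ ha hb => rw [tmul_add]; exact add_mem ha hb
    | smul b z _ hz =>
      have : (1 : A ⧸ I) ⊗ₜ[B] (b • z) = (algebraMap B (A ⧸ I) b) • ((1 : A ⧸ I) ⊗ₜ[B] z) := by
        rw [← smul_tmul, smul_tmul', Algebra.algebraMap_eq_smul_one, smul_eq_mul, mul_one]
      rw [this]
      exact S.smul_mem _ hz
  have hS : S = ⊤ := by
    rw [eq_top_iff]
    rintro t -
    induction t using TensorProduct.induction_on with
    | zero => exact zero_mem S
    | tmul a y =>
      have : a ⊗ₜ[B] y = a • ((1 : A ⧸ I) ⊗ₜ[B] y) := by rw [smul_tmul', smul_eq_mul, mul_one]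
      rw [this]
      exact S.smul_mem a (key y)
    | add a b ha hb => exact add_mem ha hb
  -- span of the mk (m i) over A⧸I is ⊤
  have hmk : Submodule.span (A ⧸ I)
      (Set.range fun i => (Submodule.Quotient.mk (m i) : M ⧸ (I • ⊤ : Submodule A M))) = ⊤ := by
    rw [eq_top_iff]
    intro u _
    obtain ⟨t, rfl⟩ : ∃ t, g t = u := ⟨g.symm u, g.apply_symm_apply u⟩
    have ht : t ∈ S := hS.symm ▸ Submodule.mem_top
    have h2 : g.toLinearMap t ∈ Submodule.map g.toLinearMap S :=
      Submodule.mem_map_of_mem ht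
    rw [hSdef, Submodule.map_span, ← Set.range_comp] at h2
    have he : (g.toLinearMap ∘ fun i => (1 : A ⧸ I) ⊗ₜ[B] x i)
        = fun i => (Submodule.Quotient.mk (m i) : M ⧸ (I • ⊤ : Submodule A M)) :=
      funext fun i => (hm i).symm
    rw [he] at h2
    exact h2
  -- over A: span of the m i together with I•⊤ is everything
  have hres : Submodule.span A
      (Set.range fun i => (Submodule.Quotient.mk (m i) : M ⧸ (I • ⊤ : Submodule A M))) = ⊤ := by
    rw [← Submodule.restrictScalars_span A (A ⧸ I) Ideal.Quotient.mk_surjective, hmk]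
    rfl
  have hmap : Submodule.map (I • ⊤ : Submodule A M).mkQ
      (Submodule.span A (Set.range m)) = ⊤ := by
    rw [Submodule.map_span, ← Set.range_comp, ← hres]
    rfl
  have hsup : Submodule.span A (Set.range m) ⊔ (I • ⊤ : Submodule A M) = ⊤ := by
    have := congrArg (Submodule.comap (I • ⊤ : Submodule A M).mkQ) hmap
    rwa [Submodule.comap_map_eq, Submodule.ker_mkQ, Submodule.comap_top] at this
  -- generators of M
  obtain ⟨l, y, hy⟩ := Module.Finite.exists_fin (R := A) (M := M)
  have hymem : ∀ t, y t ∈ Submodule.span A (Set.range m) ⊔ (I • ⊤ : Submodule A M) :=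
    fun t => hsup.symm ▸ Submodule.mem_top
  choose v hv w hw hvw using fun t => Submodule.mem_sup.mp (hymem t)
  refine ⟨k + l,
    Fintype.linearCombination B (Fin.append x (0 : Fin l → N)),
    Fintype.linearCombination A (Fin.append m w), ?_, ?_, ?_⟩
  · rw [← LinearMap.range_eq_top, Fintype.range_linearCombination, eq_top_iff, ← hx]
    refine Submodule.span_mono ?_
    rintro _ ⟨i, rfl⟩
    exact ⟨Fin.castAdd l i, Fin.append_left x 0 i⟩
  · rw [← LinearMap.range_eq_top, Fintype.range_linearCombination, eq_top_iff, ← hy,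
      Submodule.span_le]
    rintro _ ⟨t, rfl⟩
    have hvmem : v t ∈ Submodule.span A (Set.range (Fin.append m w)) := by
      refine Submodule.span_mono ?_ (hv t)
      rintro _ ⟨i, rfl⟩
      exact ⟨Fin.castAdd l i, Fin.append_left m w i⟩
    have hwmem : w t ∈ Submodule.span A (Set.range (Fin.append m w)) :=
      Submodule.subset_span ⟨Fin.natAdd k t, Fin.append_right m w t⟩
    rw [← hvw t]
    exact add_mem hvmem hwmem
  · intro i
    rw [Fintype.linearCombination_apply_single, Fintype.linearCombination_apply_single,
      one_smul, one_smul]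
    refine Fin.addCases (fun j => ?_) (fun j => ?_) i
    · rw [Fin.append_left, Fin.append_left]
      exact (hm j).symm
    · rw [Fin.append_right, Fin.append_right, Pi.zero_apply, tmul_zero, map_zero]
      exact ((Submodule.Quotient.mk_eq_zero _).mpr (hw j)).symm
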